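/- arXiv:1501.05668 — 7 statements merged into one kernel-verified Lean document; each statement's English description precedes it below -/
import Mathlib

section
/- The function F : (1,∞) → ℝ defined by F(θ) = 2√(θ²−1) / ( π(θ − √(θ²−1)) + 2θ·arctan(1/√(θ²−1)) ) is strictly increasing on (1,∞) and maps (1,∞) bijectively onto (0,∞). -/
/-- The explicit formula relating the renormalized dissipative scale `λ` to the
renormalized yield shear stress `θ_Y`:
`F(θ) = 2√(θ²−1) / (π(θ − √(θ²−1)) + 2θ·arctan(1/√(θ²−1)))`. -/
noncomputable def F (θ : ℝ) : ℝ :=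
  2 * Real.sqrt (θ ^ 2 - 1) /
    (Real.pi * (θ - Real.sqrt (θ ^ 2 - 1)) +
      2 * θ * Real.arctan (1 / Real.sqrt (θ ^ 2 - 1)))

/-- Auxiliary function: `F θ = (G (1/√(θ²−1)))⁻¹`. -/
noncomputable def Gaux (u : ℝ) : ℝ :=
  Real.pi / 2 * (Real.sqrt (1 + u ^ 2) - 1) + Real.sqrt (1 + u ^ 2) * Real.arctan u

lemma arctan_pos' {u : ℝ} (hu : 0 < u) : 0 < Real.arctan u := by
  have := Real.arctan_strictMono hu
  simpa [Real.arctan_zero] using this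

lemma one_lt_sqrt' {x : ℝ} (hx : 1 < x) : 1 < Real.sqrt x := by
  have := Real.sqrt_lt_sqrt (by norm_num : (0:ℝ) ≤ 1) hx
  simpa using this

lemma Gaux_pos {u : ℝ} (hu : 0 < u) : 0 < Gaux u := by
  have h1 : (1 : ℝ) < Real.sqrt (1 + u ^ 2) := one_lt_sqrt' (by nlinarith)
  have h2 : 0 < Real.arctan u := arctan_pos' hu
  have hπ : 0 < Real.pi / 2 := by positivity
  have h3 : 0 < Real.sqrt (1 + u ^ 2) * Real.arctan u := mul_pos (by linarith) h2
  unfold Gaux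
  nlinarith

lemma Gaux_strictMono : StrictMonoOn Gaux (Set.Ioi 0) := by
  intro a ha b hb hab
  simp only [Set.mem_Ioi] at ha hb
  have hs : Real.sqrt (1 + a ^ 2) < Real.sqrt (1 + b ^ 2) :=
    Real.sqrt_lt_sqrt (by positivity) (by nlinarith)
  have hs0 : (0:ℝ) ≤ Real.sqrt (1 + b ^ 2) := Real.sqrt_nonneg _
  have ha2 : 0 < Real.arctan a := arctan_pos' ha
  have harc : Real.arctan a ≤ Real.arctan b := (Real.arctan_strictMono hab).le
  have hπ : 0 < Real.pi / 2 := by positivity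
  have h1 : Real.pi / 2 * (Real.sqrt (1 + a ^ 2) - 1) <
      Real.pi / 2 * (Real.sqrt (1 + b ^ 2) - 1) := by nlinarith
  have h2 : Real.sqrt (1 + a ^ 2) * Real.arctan a <
      Real.sqrt (1 + b ^ 2) * Real.arctan b := mul_lt_mul hs harc ha2 hs0
  exact add_lt_add h1 h2

lemma Gaux_continuous : Continuous Gaux := by
  have h1 : Continuous fun u : ℝ => Real.sqrt (1 + u ^ 2) :=
    Real.continuous_sqrt.comp (by continuity)
  exact (continuous_const.mul (h1.sub continuous_const)).add
    (h1.mul Real.continuous_arctan)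

lemma Gaux_surj {c : ℝ} (hc : 0 < c) : ∃ u > 0, Gaux u = c := by
  have hπ1 : (1:ℝ) < Real.pi / 2 := by
    have := Real.pi_gt_three; linarith
  set M : ℝ := 1 + c with hM
  have hM0 : 0 ≤ M := by linarith
  have hGM : c ≤ Gaux M := by
    have hs : M ≤ Real.sqrt (1 + M ^ 2) := by
      have h := Real.sqrt_le_sqrt (show M ^ 2 ≤ 1 + M ^ 2 by linarith)
      rwa [Real.sqrt_sq hM0] at h
    have harc : 0 ≤ Real.arctan M :=
      (Real.arctan_strictMono.monotone (show (0:ℝ) ≤ M by linarith)).trans_eq' (by simp)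
    have hs0 : 0 ≤ Real.sqrt (1 + M ^ 2) := Real.sqrt_nonneg _
    have : Real.pi / 2 * (M - 1) ≤ Real.pi / 2 * (Real.sqrt (1 + M ^ 2) - 1) := by
      nlinarith
    have h2 : 0 ≤ Real.sqrt (1 + M ^ 2) * Real.arctan M := mul_nonneg hs0 harc
    have : Real.pi / 2 * c ≤ Gaux M := by
      unfold Gaux
      have : Real.pi / 2 * (M - 1) = Real.pi / 2 * c := by rw [hM]; ring
      linarith
    nlinarith
  have hG0 : Gaux 0 = 0 := by simp [Gaux]
  have hivt := intermediate_value_Icc hM0 Gaux_continuous.continuousOn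
  have hcmem : c ∈ Set.Icc (Gaux 0) (Gaux M) := ⟨by rw [hG0]; exact hc.le, hGM⟩
  obtain ⟨u, hu, huc⟩ := hivt hcmem
  refine ⟨u, ?_, huc⟩
  rcases lt_or_eq_of_le hu.1 with h | h
  · exact h
  · exfalso; rw [← h, hG0] at huc; linarith

lemma F_eq {θ : ℝ} (hθ : 1 < θ) :
    F θ = (Gaux (1 / Real.sqrt (θ ^ 2 - 1)))⁻¹ := by
  set s : ℝ := Real.sqrt (θ ^ 2 - 1) with hs
  have hθ2 : (0:ℝ) < θ ^ 2 - 1 := by nlinarith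
  have hs0 : 0 < s := Real.sqrt_pos.2 hθ2
  have hs2 : s ^ 2 = θ ^ 2 - 1 := Real.sq_sqrt hθ2.le
  have hsθ : s < θ := by nlinarith
  have hsq : 1 + (1 / s) ^ 2 = (θ / s) ^ 2 := by
    field_simp
    nlinarith
  have hsqrt : Real.sqrt (1 + (1 / s) ^ 2) = θ / s := by
    rw [hsq, Real.sqrt_sq (by positivity)]
  have harc : 0 < Real.arctan (1 / s) := arctan_pos' (by positivity)
  have hD : 0 < Real.pi * (θ - s) + 2 * θ * Real.arctan (1 / s) := by
    have hπ : 0 < Real.pi := Real.pi_pos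
    nlinarith
  have hG : Gaux (1 / s) =
      (Real.pi * (θ - s) + 2 * θ * Real.arctan (1 / s)) / (2 * s) := by
    unfold Gaux
    rw [hsqrt]
    field_simp
  rw [F, ← hs, hG, ← one_div, one_div_div]

/-- `F` is strictly increasing on `(1,∞)` and maps `(1,∞)` bijectively onto `(0,∞)`. -/
theorem F_strictMono_bijective :
    StrictMonoOn F (Set.Ioi 1) ∧ Set.BijOn F (Set.Ioi 1) (Set.Ioi 0) := by
  have hu : ∀ θ : ℝ, 1 < θ → 0 < 1 / Real.sqrt (θ ^ 2 - 1) := by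
    intro θ hθ
    have : (0:ℝ) < θ ^ 2 - 1 := by nlinarith
    positivity
  have hanti : ∀ a b : ℝ, 1 < a → a < b →
      1 / Real.sqrt (b ^ 2 - 1) < 1 / Real.sqrt (a ^ 2 - 1) := by
    intro a b ha hab
    have ha2 : (0:ℝ) < a ^ 2 - 1 := by nlinarith
    have hsa : 0 < Real.sqrt (a ^ 2 - 1) := Real.sqrt_pos.2 ha2
    have hlt : Real.sqrt (a ^ 2 - 1) < Real.sqrt (b ^ 2 - 1) :=
      Real.sqrt_lt_sqrt ha2.le (by nlinarith)
    exact one_div_lt_one_div_of_lt hsa hlt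
  have hmono : StrictMonoOn F (Set.Ioi 1) := by
    intro a ha b hb hab
    simp only [Set.mem_Ioi] at ha hb
    rw [F_eq ha, F_eq hb]
    have hub := hu b hb
    have h := hanti a b ha hab
    have hG := Gaux_strictMono (Set.mem_Ioi.2 hub) (Set.mem_Ioi.2 (hu a ha)) h
    exact inv_strictAnti₀ (Gaux_pos hub) hG
  refine ⟨hmono, ?_, hmono.injOn, ?_⟩
  · intro θ hθ
    simp only [Set.mem_Ioi] at hθ ⊢
    rw [F_eq hθ]
    exact inv_pos.2 (Gaux_pos (hu θ hθ))
  · intro y hy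
    simp only [Set.mem_Ioi] at hy
    obtain ⟨u, hu0, huc⟩ := Gaux_surj (show (0:ℝ) < y⁻¹ by positivity)
    refine ⟨Real.sqrt (1 + 1 / u ^ 2), ?_, ?_⟩
    · have h1 : (1:ℝ) < 1 + 1 / u ^ 2 := by
        have : (0:ℝ) < 1 / u ^ 2 := by positivity
        linarith
      exact Set.mem_Ioi.2 (one_lt_sqrt' h1)
    · have hθ1 : 1 < Real.sqrt (1 + 1 / u ^ 2) := by
        have : (0:ℝ) < 1 / u ^ 2 := by positivity
        exact one_lt_sqrt' (by linarith)
      rw [F_eq hθ1]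
      have hsq : Real.sqrt (1 + 1 / u ^ 2) ^ 2 - 1 = (1 / u) ^ 2 := by
        rw [Real.sq_sqrt (by positivity)]
        field_simp
        ring
      rw [hsq, Real.sqrt_sq (by positivity), one_div_one_div, huc, inv_inv]
end

section
/- For λ > 0 let θ̂_Y(λ) denote the infimum of Ψ_λ(φ) = ∫_{−1}^{1} √(φ(r)² + λ²·φ′(r)²) dr over all continuously differentiable functions φ : [−1,1] → ℝ with φ(−1) = φ(1) = 0 and ∫_{−1}^{1} φ(r) dr = 1. Then the map λ ↦ θ̂_Y(λ) is strictly increasing on (0,∞). -/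
/-- The renormalized plastic dissipation
`Ψ_λ(φ) = ∫_{-1}^{1} √(φ(r)² + λ²·φ'(r)²) dr`. -/
noncomputable def Psi (lam : ℝ) (φ : ℝ → ℝ) : ℝ :=
  ∫ r in (-1 : ℝ)..1, Real.sqrt ((φ r) ^ 2 + lam ^ 2 * (deriv φ r) ^ 2)

/-- The renormalized yield shear stress `θ̂_Y(λ)`: the infimum of `Ψ_λ(φ)` over all
C¹ functions `φ : [-1,1] → ℝ` with `φ(−1) = φ(1) = 0` and `∫_{−1}^{1} φ = 1`. -/
noncomputable def thetaY (lam : ℝ) : ℝ :=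
  sInf {t : ℝ | ∃ φ : ℝ → ℝ, ContDiff ℝ 1 φ ∧ φ (-1) = 0 ∧ φ 1 = 0 ∧
    (∫ r in (-1 : ℝ)..1, φ r) = 1 ∧ Psi lam φ = t}

namespace ThetaAux

def Adm (φ : ℝ → ℝ) : Prop :=
  ContDiff ℝ 1 φ ∧ φ (-1) = 0 ∧ φ 1 = 0 ∧ (∫ r in (-1 : ℝ)..1, φ r) = 1

def S (lam : ℝ) : Set ℝ :=
  {t : ℝ | ∃ φ : ℝ → ℝ, ContDiff ℝ 1 φ ∧ φ (-1) = 0 ∧ φ 1 = 0 ∧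
    (∫ r in (-1 : ℝ)..1, φ r) = 1 ∧ Psi lam φ = t}

lemma thetaY_eq (lam : ℝ) : thetaY lam = sInf (S lam) := rfl

lemma cont_integrand (lam : ℝ) {φ : ℝ → ℝ} (hφ : ContDiff ℝ 1 φ) :
    Continuous fun r => Real.sqrt ((φ r) ^ 2 + lam ^ 2 * (deriv φ r) ^ 2) := by
  have h1 : Continuous φ := hφ.continuous
  have h2 : Continuous (deriv φ) := hφ.continuous_deriv le_rfl
  fun_prop

lemma integrable_integrand (lam : ℝ) {φ : ℝ → ℝ} (hφ : ContDiff ℝ 1 φ) (a b : ℝ) :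
    IntervalIntegrable (fun r => Real.sqrt ((φ r) ^ 2 + lam ^ 2 * (deriv φ r) ^ 2))
      MeasureTheory.volume a b :=
  (cont_integrand lam hφ).intervalIntegrable a b

lemma Psi_nonneg (lam : ℝ) (φ : ℝ → ℝ) : 0 ≤ Psi lam φ :=
  intervalIntegral.integral_nonneg (by norm_num) (fun x _ => Real.sqrt_nonneg _)

lemma S_bddBelow (lam : ℝ) : BddBelow (S lam) := by
  refine ⟨0, fun t ht => ?_⟩
  obtain ⟨φ, _, _, _, _, h⟩ := ht
  exact h ▸ Psi_nonneg lam φ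

lemma S_nonempty (lam : ℝ) : (S lam).Nonempty := by
  refine ⟨Psi lam (fun r => 3/4 * (1 - r^2)), fun r => 3/4 * (1 - r^2), ?_, by norm_num,
    by norm_num, ?_, rfl⟩
  · have : ContDiff ℝ 1 (fun r : ℝ => 3/4 * (1 - r^2)) := by fun_prop
    exact this
  · have h1 : IntervalIntegrable (fun r : ℝ => (3:ℝ)/4) MeasureTheory.volume (-1) 1 :=
      (continuous_const).intervalIntegrable _ _
    have h2 : IntervalIntegrable (fun r : ℝ => 3/4 * r^2) MeasureTheory.volume (-1) 1 :=
      (by fun_prop : Continuous fun r : ℝ => 3/4 * r^2).intervalIntegrable _ _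
    have : (∫ r in (-1:ℝ)..1, 3/4 * (1 - r^2)) =
        (∫ r in (-1:ℝ)..1, (3:ℝ)/4) - ∫ r in (-1:ℝ)..1, 3/4 * r^2 := by
      rw [← intervalIntegral.integral_sub h1 h2]
      congr 1; ext r; ring
    rw [this, intervalIntegral.integral_const]
    have : (∫ r in (-1:ℝ)..1, 3/4 * r^2) = 3/4 * ∫ r in (-1:ℝ)..1, r^2 := by
      simp [intervalIntegral.integral_const_mul]
    rw [this, integral_pow]
    norm_num

/-- Membership: `Psi lam φ ∈ S lam` for admissible `φ`. -/
lemma Psi_mem (lam : ℝ) {φ : ℝ → ℝ} (h : Adm φ) : Psi lam φ ∈ S lam :=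
  ⟨φ, h.1, h.2.1, h.2.2.1, h.2.2.2, rfl⟩

lemma thetaY_le_Psi (lam : ℝ) {φ : ℝ → ℝ} (h : Adm φ) : thetaY lam ≤ Psi lam φ :=
  csInf_le (S_bddBelow lam) (Psi_mem lam h)

/-- The key analytic lower bound `Ψ_λ(φ) ≥ √(1+λ²)`. -/
lemma Psi_lower (lam : ℝ) {φ : ℝ → ℝ} (h : Adm φ) :
    Real.sqrt (1 + lam ^ 2) ≤ Psi lam φ := by
  obtain ⟨hφ, hm1, hp1, hint⟩ := h
  have hcont : Continuous φ := hφ.continuous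
  have hcont' : Continuous (deriv φ) := hφ.continuous_deriv le_rfl
  have hIφ : IntervalIntegrable (fun r => |φ r|) MeasureTheory.volume (-1) 1 :=
    (hcont.abs).intervalIntegrable _ _
  have hIφ' : ∀ a b : ℝ, IntervalIntegrable (fun r => |deriv φ r|) MeasureTheory.volume a b :=
    fun a b => (hcont'.abs).intervalIntegrable a b
  -- ∫ |φ| ≥ 1
  have habs : (1:ℝ) ≤ ∫ r in (-1:ℝ)..1, |φ r| := by
    calc (1:ℝ) = |∫ r in (-1:ℝ)..1, φ r| := by rw [hint]; norm_num
    _ ≤ ∫ r in (-1:ℝ)..1, |φ r| := intervalIntegral.abs_integral_le_integral_abs (by norm_num)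
  -- max of φ is ≥ 1/2
  obtain ⟨r0, hr0, hmax⟩ := (isCompact_Icc : IsCompact (Set.Icc (-1:ℝ) 1)).exists_isMaxOn
    ⟨0, by norm_num⟩ hcont.continuousOn
  have hr0half : (1:ℝ)/2 ≤ φ r0 := by
    by_contra hlt
    push_neg at hlt
    have : (∫ r in (-1:ℝ)..1, φ r) ≤ ∫ _ in (-1:ℝ)..1, φ r0 := by
      apply intervalIntegral.integral_mono_on (by norm_num)
        (hcont.intervalIntegrable _ _) (continuous_const.intervalIntegrable _ _)
      exact fun x hx => hmax hx
    rw [hint, intervalIntegral.integral_const] at this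
    simp at this
    linarith
  -- ∫|φ'| ≥ 1
  have hftc : ∀ a b : ℝ, (∫ r in a..b, deriv φ r) = φ b - φ a := fun a b =>
    intervalIntegral.integral_deriv_eq_sub
      (fun x _ => (hφ.differentiable one_ne_zero).differentiableAt)
      (hcont'.intervalIntegrable a b)
  have hd1 : φ r0 ≤ ∫ r in (-1:ℝ)..r0, |deriv φ r| := by
    calc φ r0 = φ r0 - φ (-1) := by rw [hm1]; ring
    _ ≤ |φ r0 - φ (-1)| := le_abs_self _
    _ = |∫ r in (-1:ℝ)..r0, deriv φ r| := by rw [hftc]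
    _ ≤ ∫ r in (-1:ℝ)..r0, |deriv φ r| :=
        intervalIntegral.abs_integral_le_integral_abs hr0.1
  have hd2 : φ r0 ≤ ∫ r in r0..(1:ℝ), |deriv φ r| := by
    calc φ r0 = -(φ 1 - φ r0) := by rw [hp1]; ring
    _ ≤ |φ 1 - φ r0| := neg_le_abs _
    _ = |∫ r in r0..(1:ℝ), deriv φ r| := by rw [hftc]
    _ ≤ ∫ r in r0..(1:ℝ), |deriv φ r| :=
        intervalIntegral.abs_integral_le_integral_abs hr0.2
  have hder : (1:ℝ) ≤ ∫ r in (-1:ℝ)..1, |deriv φ r| := by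
    have hsplit := intervalIntegral.integral_add_adjacent_intervals
      (hIφ' (-1) r0) (hIφ' r0 1)
    linarith
  -- pointwise Cauchy-Schwarz
  have hpt : ∀ r : ℝ, |φ r| + lam^2 * |deriv φ r| ≤
      Real.sqrt (1 + lam^2) * Real.sqrt ((φ r)^2 + lam^2 * (deriv φ r)^2) := by
    intro r
    rw [← Real.sqrt_mul (by positivity)]
    rw [show |φ r| + lam^2 * |deriv φ r| =
      Real.sqrt ((|φ r| + lam^2 * |deriv φ r|)^2) from
      (Real.sqrt_sq (by positivity)).symm]
    apply Real.sqrt_le_sqrt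
    have h1 : |φ r|^2 = (φ r)^2 := sq_abs _
    have h2 : |deriv φ r|^2 = (deriv φ r)^2 := sq_abs _
    rw [← h1, ← h2]
    nlinarith [sq_nonneg (lam * (|φ r| - |deriv φ r|)), abs_nonneg (φ r),
      abs_nonneg (deriv φ r), sq_nonneg lam]
  -- integrate the pointwise bound
  have hint2 : (∫ r in (-1:ℝ)..1, (|φ r| + lam^2 * |deriv φ r|)) ≤
      Real.sqrt (1 + lam^2) * Psi lam φ := by
    rw [show Real.sqrt (1+lam^2) * Psi lam φ =
      ∫ r in (-1:ℝ)..1, Real.sqrt (1+lam^2) *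
        Real.sqrt ((φ r)^2 + lam^2 * (deriv φ r)^2) from
      (intervalIntegral.integral_const_mul _ _).symm]
    apply intervalIntegral.integral_mono_on (by norm_num)
      (hIφ.add ((hIφ' (-1) 1).const_mul _))
      (((integrable_integrand lam hφ (-1) 1)).const_mul _)
    exact fun x _ => hpt x
  have hsum : (1:ℝ) + lam^2 ≤ ∫ r in (-1:ℝ)..1, (|φ r| + lam^2 * |deriv φ r|) := by
    rw [intervalIntegral.integral_add hIφ ((hIφ' (-1) 1).const_mul _),
      intervalIntegral.integral_const_mul]
    nlinarith [sq_nonneg lam]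
  have hpos : (0:ℝ) < Real.sqrt (1 + lam^2) := Real.sqrt_pos.mpr (by positivity)
  have hbig : 1 + lam^2 ≤ Real.sqrt (1+lam^2) * Psi lam φ := le_trans hsum hint2
  have hsq : Real.sqrt (1+lam^2) * Real.sqrt (1+lam^2) = 1 + lam^2 :=
    Real.mul_self_sqrt (by positivity)
  nlinarith [hbig, hsq, hpos]

lemma thetaY_lower (lam : ℝ) : Real.sqrt (1 + lam^2) ≤ thetaY lam := by
  rw [thetaY_eq]
  apply le_csInf (S_nonempty lam)
  rintro t ⟨φ, h1, h2, h3, h4, rfl⟩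
  exact Psi_lower lam ⟨h1, h2, h3, h4⟩

/-- Pointwise concavity in `λ²`. -/
lemma sqrt_concave_pt (a b : ℝ) {lam mu nu t : ℝ} (ht0 : 0 ≤ t) (ht1 : t ≤ 1)
    (hmu : mu^2 = t * lam^2 + (1-t) * nu^2) :
    t * Real.sqrt (a^2 + lam^2 * b^2) + (1-t) * Real.sqrt (a^2 + nu^2 * b^2) ≤
      Real.sqrt (a^2 + mu^2 * b^2) := by
  set A := Real.sqrt (a^2 + lam^2 * b^2) with hA
  set B := Real.sqrt (a^2 + nu^2 * b^2) with hB
  have hA0 : 0 ≤ A := Real.sqrt_nonneg _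
  have hB0 : 0 ≤ B := Real.sqrt_nonneg _
  have hA2 : A^2 = a^2 + lam^2 * b^2 := Real.sq_sqrt (by positivity)
  have hB2 : B^2 = a^2 + nu^2 * b^2 := Real.sq_sqrt (by positivity)
  have hkey : a^2 + mu^2 * b^2 = t * A^2 + (1-t) * B^2 := by
    rw [hA2, hB2, hmu]; ring
  rw [hkey]
  have hcnn : 0 ≤ t * A + (1-t) * B := by
    have h1 := mul_nonneg ht0 hA0
    have h2 := mul_nonneg (by linarith : (0:ℝ) ≤ 1 - t) hB0
    linarith
  rw [show t * A + (1-t) * B = Real.sqrt ((t*A + (1-t)*B)^2) from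
    (Real.sqrt_sq hcnn).symm]
  apply Real.sqrt_le_sqrt
  nlinarith [sq_nonneg (A - B), mul_nonneg ht0 (sub_nonneg.mpr ht1)]

/-- Concavity inequality for `Psi`. -/
lemma Psi_concave {lam mu nu t : ℝ} (ht0 : 0 ≤ t) (ht1 : t ≤ 1)
    (hmu : mu^2 = t * lam^2 + (1-t) * nu^2) {φ : ℝ → ℝ} (hφ : ContDiff ℝ 1 φ) :
    t * Psi lam φ + (1-t) * Psi nu φ ≤ Psi mu φ := by
  have h1 := integrable_integrand lam hφ (-1) 1
  have h2 := integrable_integrand nu hφ (-1) 1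
  have h3 := integrable_integrand mu hφ (-1) 1
  calc t * Psi lam φ + (1-t) * Psi nu φ
      = ∫ r in (-1:ℝ)..1, (t * Real.sqrt ((φ r)^2 + lam^2 * (deriv φ r)^2) +
        (1-t) * Real.sqrt ((φ r)^2 + nu^2 * (deriv φ r)^2)) := by
        rw [intervalIntegral.integral_add (h1.const_mul t) (h2.const_mul (1-t)),
          intervalIntegral.integral_const_mul, intervalIntegral.integral_const_mul]
        rfl
  _ ≤ Psi mu φ := by
        apply intervalIntegral.integral_mono_on (by norm_num)
          ((h1.const_mul t).add (h2.const_mul (1-t))) h3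
        exact fun x _ => sqrt_concave_pt (φ x) (deriv φ x) ht0 ht1 hmu

lemma thetaY_concave {lam mu nu t : ℝ} (ht0 : 0 ≤ t) (ht1 : t ≤ 1)
    (hmu : mu^2 = t * lam^2 + (1-t) * nu^2) :
    t * thetaY lam + (1-t) * thetaY nu ≤ thetaY mu := by
  rw [thetaY_eq mu]
  apply le_csInf (S_nonempty mu)
  rintro x ⟨φ, h1, h2, h3, h4, rfl⟩
  have hadm : Adm φ := ⟨h1, h2, h3, h4⟩
  calc t * thetaY lam + (1-t) * thetaY nu
      ≤ t * Psi lam φ + (1-t) * Psi nu φ := by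
        have := thetaY_le_Psi lam hadm
        have := thetaY_le_Psi nu hadm
        have ht1' : 0 ≤ 1 - t := by linarith
        nlinarith [thetaY_le_Psi lam hadm, thetaY_le_Psi nu hadm]
  _ ≤ Psi mu φ := Psi_concave ht0 ht1 hmu h1

end ThetaAux

/-- The renormalized yield shear stress is strictly increasing in the renormalized
dissipative scale `λ`: thinner specimens are stronger. -/
theorem thetaY_strictMono : StrictMonoOn thetaY (Set.Ioi 0) := by
  intro lam hlam mu hmu hlt
  simp only [Set.mem_Ioi] at hlam hmu
  by_contra hcon
  push_neg at hcon
  -- choose a huge ν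
  set nu : ℝ := |thetaY lam| + mu + 1 with hnu
  have hnumu : mu < nu := by
    have := abs_nonneg (thetaY lam); simp [hnu]; linarith
  set t : ℝ := (nu^2 - mu^2) / (nu^2 - lam^2) with ht
  have hlamnu : lam < nu := lt_trans hlt hnumu
  have hden : 0 < nu^2 - lam^2 := by nlinarith
  have hnum : 0 < nu^2 - mu^2 := by nlinarith
  have ht0 : 0 < t := div_pos hnum hden
  have ht1 : t < 1 := by
    rw [ht, div_lt_one hden]
    nlinarith
  have hmu2 : mu^2 = t * lam^2 + (1-t) * nu^2 := by
    rw [ht]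
    field_simp [hden.ne']
    ring
  have hconc := ThetaAux.thetaY_concave (le_of_lt ht0) (le_of_lt ht1) hmu2
  have hnular : thetaY lam < thetaY nu := by
    have h1 : Real.sqrt (1 + nu^2) ≤ thetaY nu := ThetaAux.thetaY_lower nu
    have hnu0 : 0 ≤ nu := by
      have := abs_nonneg (thetaY lam); simp only [hnu]; linarith
    have h2 : nu ≤ Real.sqrt (1 + nu^2) := by
      rw [Real.le_sqrt hnu0 (by positivity)]; linarith
    have h3 : thetaY lam < nu := by
      have := le_abs_self (thetaY lam); simp [hnu]; linarith
    linarith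
  -- contradiction: concavity forces θν ≤ θλ
  have hfin : t * thetaY lam + (1-t) * thetaY nu ≤ thetaY lam := le_trans hconc hcon
  nlinarith [mul_pos (sub_pos.mpr hnular) (sub_pos.mpr ht1)]
end

section
/- Let F(θ) = 2√(θ²−1) / ( π(θ − √(θ²−1)) + 2θ·arctan(1/√(θ²−1)) ) for θ > 1. Then lim_{θ → 1⁺} F(θ)/√(θ−1) = √2/π. -/
open Filter Real Set Topology

lemma tendsto_sqrt_sub_one :
    Tendsto (fun θ : ℝ => Real.sqrt (θ ^ 2 - 1)) (𝓝[>] 1) (𝓝[>] 0) := by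
  apply tendsto_nhdsWithin_of_tendsto_nhds_of_eventually_within
  · have : Tendsto (fun θ : ℝ => Real.sqrt (θ ^ 2 - 1)) (𝓝 1) (𝓝 (Real.sqrt (1 ^ 2 - 1))) := by
      exact (Real.continuous_sqrt.comp (by continuity)).tendsto 1
    simpa using this.mono_left nhdsWithin_le_nhds
  · filter_upwards [self_mem_nhdsWithin] with θ (hθ : 1 < θ)
    have : (0:ℝ) < θ ^ 2 - 1 := by nlinarith
    exact Real.sqrt_pos.mpr this

lemma tendsto_arctan_part :
    Tendsto (fun θ : ℝ => Real.arctan (1 / Real.sqrt (θ ^ 2 - 1))) (𝓝[>] 1)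
      (𝓝 (Real.pi / 2)) := by
  have h : Tendsto (fun θ : ℝ => 1 / Real.sqrt (θ ^ 2 - 1)) (𝓝[>] 1) atTop := by
    simpa [one_div, Pi.inv_def] using tendsto_sqrt_sub_one.inv_tendsto_nhdsGT_zero
  exact (Real.tendsto_arctan_atTop.mono_right nhdsWithin_le_nhds).comp h

/-- The asymptotic behavior `F(θ) ∼ (√2/π)·√(θ−1)` as `θ → 1⁺`:
`lim_{θ → 1⁺} F(θ)/√(θ−1) = √2/π`. -/
theorem F_asymptotics_at_one :
    Filter.Tendsto (fun θ : ℝ => F θ / Real.sqrt (θ - 1))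
      (nhdsWithin 1 (Set.Ioi 1)) (nhds (Real.sqrt 2 / Real.pi)) := by
  have hπ : (0:ℝ) < Real.pi := Real.pi_pos
  set D : ℝ → ℝ := fun θ => Real.pi * (θ - Real.sqrt (θ ^ 2 - 1)) +
      2 * θ * Real.arctan (1 / Real.sqrt (θ ^ 2 - 1)) with hDdef
  have hs : Tendsto (fun θ : ℝ => Real.sqrt (θ ^ 2 - 1)) (𝓝[>] 1) (𝓝 0) :=
    tendsto_sqrt_sub_one.mono_right nhdsWithin_le_nhds
  have hid : Tendsto (fun θ : ℝ => θ) (𝓝[>] (1:ℝ)) (𝓝 1) :=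
    tendsto_id.mono_left nhdsWithin_le_nhds
  have hD : Tendsto D (𝓝[>] 1) (𝓝 (2 * Real.pi)) := by
    have h1 : Tendsto (fun θ : ℝ => Real.pi * (θ - Real.sqrt (θ ^ 2 - 1))) (𝓝[>] 1)
        (𝓝 (Real.pi * (1 - 0))) := (tendsto_const_nhds.mul (hid.sub hs))
    have h2 : Tendsto (fun θ : ℝ => 2 * θ * Real.arctan (1 / Real.sqrt (θ ^ 2 - 1))) (𝓝[>] 1)
        (𝓝 (2 * 1 * (Real.pi / 2))) :=
      ((tendsto_const_nhds.mul hid).mul tendsto_arctan_part)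
    have := h1.add h2
    convert this using 2
    ring
  have hN : Tendsto (fun θ : ℝ => 2 * Real.sqrt (θ + 1)) (𝓝[>] 1)
      (𝓝 (2 * Real.sqrt 2)) := by
    have h : Tendsto (fun θ : ℝ => Real.sqrt (θ + 1)) (𝓝 1) (𝓝 (Real.sqrt (1 + 1))) :=
      (Real.continuous_sqrt.comp (by continuity)).tendsto 1
    have h2 : Tendsto (fun θ : ℝ => 2 * Real.sqrt (θ + 1)) (𝓝[>] 1)
        (𝓝 (2 * Real.sqrt (1 + 1))) :=
      (tendsto_const_nhds : Tendsto (fun _ : ℝ => (2:ℝ)) (𝓝[>] 1) (𝓝 2)).mul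
        (h.mono_left nhdsWithin_le_nhds)
    norm_num at h2 ⊢
    exact h2
  have hmain : Tendsto (fun θ : ℝ => 2 * Real.sqrt (θ + 1) / D θ) (𝓝[>] 1)
      (𝓝 (2 * Real.sqrt 2 / (2 * Real.pi))) :=
    hN.div hD (by positivity)
  have heq : 2 * Real.sqrt 2 / (2 * Real.pi) = Real.sqrt 2 / Real.pi := by
    field_simp
  rw [← heq]
  refine hmain.congr' ?_
  filter_upwards [self_mem_nhdsWithin] with θ (hθ : 1 < θ)
  have h1 : (0:ℝ) < θ - 1 := by linarith
  have h2 : (0:ℝ) ≤ θ + 1 := by linarith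
  have hsq : Real.sqrt (θ ^ 2 - 1) = Real.sqrt (θ - 1) * Real.sqrt (θ + 1) := by
    rw [← Real.sqrt_mul h1.le]
    ring_nf
  have hs1 : Real.sqrt (θ - 1) ≠ 0 := ne_of_gt (Real.sqrt_pos.mpr h1)
  show 2 * Real.sqrt (θ + 1) / D θ = F θ / Real.sqrt (θ - 1)
  rw [F]
  have hDθ : Real.pi * (θ - Real.sqrt (θ ^ 2 - 1)) +
      2 * θ * Real.arctan (1 / Real.sqrt (θ ^ 2 - 1)) = D θ := rfl
  rw [hDθ, hsq, show
    2 * (Real.sqrt (θ - 1) * Real.sqrt (θ + 1)) = 2 * Real.sqrt (θ + 1) * Real.sqrt (θ - 1) by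
      ring, div_right_comm, mul_div_cancel_right₀ _ hs1]
end

section
/- For λ > 0 let θ̂_Y(λ) denote the infimum of Ψ_λ(φ) = ∫_{−1}^{1} √(φ(r)² + λ²·φ′(r)²) dr over all continuously differentiable functions φ : [−1,1] → ℝ with φ(−1) = φ(1) = 0 and ∫_{−1}^{1} φ(r) dr = 1. Then lim_{λ → 0⁺} (θ̂_Y(λ) − 1)/λ² = π²/2. -/
open Real Set Filter intervalIntegral

lemma cauchy_pt (w v x y L : ℝ) (h : w ^ 2 + v ^ 2 ≤ 1) :
    w * x + v * (L * y) ≤ Real.sqrt (x ^ 2 + L ^ 2 * y ^ 2) := by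
  apply Real.le_sqrt_of_sq_le
  nlinarith [sq_nonneg (w * (L * y) - v * x), sq_nonneg x, sq_nonneg (L * y),
    sq_nonneg (w * x + v * (L * y))]

noncomputable def phi0 : ℝ → ℝ := fun r => Real.cos (π * r / 2) ^ 2

lemma phi0_hasDeriv (r : ℝ) :
    HasDerivAt phi0 (-(π / 2) * Real.sin (π * r)) r := by
  have h1 : HasDerivAt (fun r : ℝ => π * r / 2) (π / 2) r := by
    simpa using ((hasDerivAt_id r).const_mul π).div_const 2
  have h2 := (h1.cos).pow 2
  refine h2.congr_deriv ?_
  have hs := Real.sin_two_mul (π * r / 2)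
  rw [show 2 * (π * r / 2) = π * r by ring] at hs
  rw [hs]; ring

lemma phi0_deriv : deriv phi0 = fun r => -(π / 2) * Real.sin (π * r) :=
  funext fun r => (phi0_hasDeriv r).deriv

lemma phi0_contDiff : ContDiff ℝ 1 phi0 := by
  unfold phi0
  exact (Real.contDiff_cos.comp ((contDiff_const.mul contDiff_id).div_const 2)).pow 2 |>.of_le le_top

lemma integral_phi0 : (∫ r in (-1 : ℝ)..1, phi0 r) = 1 := by
  have hd : ∀ x ∈ uIcc (-1 : ℝ) 1, HasDerivAt (fun r => r / 2 + Real.sin (π * r) / (2 * π))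
      (phi0 x) x := by
    intro x _
    have h1 : HasDerivAt (fun r : ℝ => r / 2 + Real.sin (π * r) / (2 * π))
        (1 / 2 + Real.cos (π * x) * π / (2 * π)) x := by
      have := ((hasDerivAt_id x).div_const 2).add
        ((((hasDerivAt_id x).const_mul π).sin).div_const (2 * π))
      exact this.congr_deriv (by simp)
    convert h1 using 1
    have hc := Real.cos_two_mul (π * x / 2)
    rw [show 2 * (π * x / 2) = π * x by ring] at hc
    have hπ : (π : ℝ) ≠ 0 := Real.pi_ne_zero
    unfold phi0
    field_simp
    linear_combination (-1 : ℝ) * hc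
  have hint : IntervalIntegrable phi0 MeasureTheory.volume (-1) 1 :=
    (phi0_contDiff.continuous).intervalIntegrable _ _
  rw [intervalIntegral.integral_eq_sub_of_hasDerivAt hd hint]
  rw [show π * (1:ℝ) = π by ring, show π * (-1:ℝ) = -π by ring, Real.sin_neg, Real.sin_pi]
  norm_num

lemma integral_sin_sq_half : (∫ r in (-1 : ℝ)..1, Real.sin (π * r / 2) ^ 2) = 1 := by
  have hd : ∀ x ∈ uIcc (-1 : ℝ) 1, HasDerivAt (fun r => r / 2 - Real.sin (π * r) / (2 * π))
      (Real.sin (π * x / 2) ^ 2) x := by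
    intro x _
    have h1 : HasDerivAt (fun r : ℝ => r / 2 - Real.sin (π * r) / (2 * π))
        (1 / 2 - Real.cos (π * x) * π / (2 * π)) x := by
      have := ((hasDerivAt_id x).div_const 2).sub
        ((((hasDerivAt_id x).const_mul π).sin).div_const (2 * π))
      exact this.congr_deriv (by simp)
    convert h1 using 1
    have hc := Real.cos_two_mul' (π * x / 2)
    rw [show 2 * (π * x / 2) = π * x by ring] at hc
    have hc2 := Real.sin_sq_add_cos_sq (π * x / 2)
    have hπ : (π : ℝ) ≠ 0 := Real.pi_ne_zero
    field_simp
    linear_combination hc + hc2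
  have hint : IntervalIntegrable (fun r => Real.sin (π * r / 2) ^ 2) MeasureTheory.volume (-1) 1 :=
    (((Real.continuous_sin.comp ((continuous_const.mul continuous_id).div_const 2)).pow 2)).intervalIntegrable _ _
  rw [intervalIntegral.integral_eq_sub_of_hasDerivAt hd hint]
  rw [show π * (1:ℝ) = π by ring, show π * (-1:ℝ) = -π by ring, Real.sin_neg, Real.sin_pi]
  norm_num

noncomputable def Sset (lam : ℝ) : Set ℝ :=
  {t : ℝ | ∃ φ : ℝ → ℝ, ContDiff ℝ 1 φ ∧ φ (-1) = 0 ∧ φ 1 = 0 ∧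
    (∫ r in (-1 : ℝ)..1, φ r) = 1 ∧ Psi lam φ = t}

lemma thetaY_eq (lam : ℝ) : thetaY lam = sInf (Sset lam) := rfl

lemma phi0_neg_one : phi0 (-1) = 0 := by
  show Real.cos (π * (-1) / 2) ^ 2 = 0
  rw [show π * (-1) / 2 = -(π / 2) by ring, Real.cos_neg, Real.cos_pi_div_two]
  norm_num

lemma phi0_one : phi0 1 = 0 := by
  show Real.cos (π * 1 / 2) ^ 2 = 0
  rw [show π * 1 / 2 = π / 2 by ring, Real.cos_pi_div_two]
  norm_num

lemma phi0_mem (lam : ℝ) : Psi lam phi0 ∈ Sset lam :=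
  ⟨phi0, phi0_contDiff, phi0_neg_one, phi0_one, integral_phi0, rfl⟩

lemma sset_nonempty (lam : ℝ) : (Sset lam).Nonempty := ⟨_, phi0_mem lam⟩

lemma sset_bddBelow (lam : ℝ) : BddBelow (Sset lam) := by
  refine ⟨0, fun t ht => ?_⟩
  obtain ⟨φ, -, -, -, -, hP⟩ := ht
  rw [← hP]
  exact intervalIntegral.integral_nonneg (by norm_num) (fun u _ => Real.sqrt_nonneg _)

lemma deriv_continuous {φ : ℝ → ℝ} (hφ : ContDiff ℝ 1 φ) : Continuous (deriv φ) :=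
  hφ.continuous_deriv le_rfl

lemma psi_phi0_le (lam : ℝ) : Psi lam phi0 ≤ 1 + π ^ 2 / 2 * lam ^ 2 := by
  have hcont1 : Continuous fun r : ℝ => Real.sqrt ((phi0 r) ^ 2 + lam ^ 2 * (deriv phi0 r) ^ 2) :=
    (((phi0_contDiff.continuous).pow 2).add
      (continuous_const.mul (((deriv_continuous phi0_contDiff)).pow 2))).sqrt
  have hcont2 : Continuous fun r : ℝ => phi0 r + lam ^ 2 * π ^ 2 / 2 * Real.sin (π * r / 2) ^ 2 :=
    (phi0_contDiff.continuous).add (continuous_const.mul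
      ((Real.continuous_sin.comp ((continuous_const.mul continuous_id).div_const 2)).pow 2))
  have hpt : ∀ r ∈ Icc (-1 : ℝ) 1,
      Real.sqrt ((phi0 r) ^ 2 + lam ^ 2 * (deriv phi0 r) ^ 2)
        ≤ phi0 r + lam ^ 2 * π ^ 2 / 2 * Real.sin (π * r / 2) ^ 2 := by
    intro r _
    simp only [phi0_deriv]
    have hR : (0:ℝ) ≤ phi0 r + lam ^ 2 * π ^ 2 / 2 * Real.sin (π * r / 2) ^ 2 := by
      have : (0:ℝ) ≤ phi0 r := sq_nonneg _
      positivity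
    rw [show phi0 r + lam ^ 2 * π ^ 2 / 2 * Real.sin (π * r / 2) ^ 2
      = Real.sqrt ((phi0 r + lam ^ 2 * π ^ 2 / 2 * Real.sin (π * r / 2) ^ 2) ^ 2) from
      (Real.sqrt_sq hR).symm]
    apply Real.sqrt_le_sqrt
    have hs := Real.sin_two_mul (π * r / 2)
    rw [show 2 * (π * r / 2) = π * r by ring] at hs
    unfold phi0
    rw [hs]
    nlinarith [sq_nonneg (lam ^ 2 * π ^ 2 / 2 * Real.sin (π * r / 2) ^ 2),
      sq_nonneg (Real.sin (π * r / 2) * Real.cos (π * r / 2))]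
  have hi1 : IntervalIntegrable (fun r : ℝ => Real.sqrt ((phi0 r) ^ 2 + lam ^ 2 * (deriv phi0 r) ^ 2)) MeasureTheory.volume (-1) 1 := hcont1.intervalIntegrable _ _
  have hi2 : IntervalIntegrable (fun r : ℝ => phi0 r + lam ^ 2 * π ^ 2 / 2 * Real.sin (π * r / 2) ^ 2) MeasureTheory.volume (-1) 1 := hcont2.intervalIntegrable _ _
  have hmono := intervalIntegral.integral_mono_on (by norm_num : (-1:ℝ) ≤ 1) hi1 hi2 hpt
  unfold Psi
  refine hmono.trans ?_
  have hj1 : IntervalIntegrable (fun r : ℝ => phi0 r) MeasureTheory.volume (-1) 1 :=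
    (phi0_contDiff.continuous).intervalIntegrable _ _
  have hj2 : IntervalIntegrable (fun r : ℝ => lam ^ 2 * π ^ 2 / 2 * Real.sin (π * r / 2) ^ 2)
      MeasureTheory.volume (-1) 1 := by
    apply Continuous.intervalIntegrable
    fun_prop
  rw [intervalIntegral.integral_add hj1 hj2,
    intervalIntegral.integral_const_mul, integral_phi0, integral_sin_sq_half]
  ring_nf
  nlinarith [sq_nonneg (lam * π)]

lemma thetaY_le (lam : ℝ) : thetaY lam ≤ 1 + π ^ 2 / 2 * lam ^ 2 := by
  rw [thetaY_eq]
  exact (csInf_le (sset_bddBelow lam) (phi0_mem lam)).trans (psi_phi0_le lam)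

set_option maxHeartbeats 1000000

lemma dual_bound (a ν k T lam : ℝ) (ha : 0 < a) (hν1 : 1 < ν)
    (hak : 2 * k ^ 2 = a * ν ^ 2) (hk0 : 0 < k) (hkπ : k < π / 2) (hT : T = Real.tan k)
    (hl0 : 0 < lam)
    (hA' : 4 * lam ^ 2 * k ^ 2 * T ^ 2 ≤ (ν - 1) * ν)
    (hB' : 2 * lam ^ 2 * k ^ 2 * (1 + T ^ 2) ≤ ν)
    (hC' : 2 * ν * (a * lam ^ 2) ≤ ν - 1)
    (r : ℝ) (hr : r ∈ Icc (-1 : ℝ) 1) :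
    ((1 + a * lam ^ 2) + lam * (-(2 * lam * k / ν * k *
        (1 + Real.tan (k * r) ^ 2) * Real.cos (2 * lam * k / ν * Real.tan (k * r))))) ^ 2
      + (-Real.sin (2 * lam * k / ν * Real.tan (k * r))) ^ 2 ≤ 1 := by
  obtain ⟨hr1, hr2⟩ := hr
  have hν0 : 0 < ν := by linarith
  set M := 2 * lam * k / ν with hM_def
  set t := Real.tan (k * r) with ht_def
  set θ := M * t with hθ_def
  set co := Real.cos θ with hco_def
  set s := Real.sin θ with hs_def
  set ε := a * lam ^ 2 with hε_def
  have hε0 : 0 < ε := by rw [hε_def]; positivity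
  have hM0 : 0 < M := by rw [hM_def]; positivity
  have hkr1 : k * r ≤ k := by
    calc k * r ≤ k * 1 := mul_le_mul_of_nonneg_left hr2 hk0.le
    _ = k := mul_one k
  have hkr2 : -k ≤ k * r := by
    have h := mul_le_mul_of_nonneg_left hr1 hk0.le
    rw [mul_neg, mul_one] at h; exact h
  have hmem : k * r ∈ Ioo (-(π / 2)) (π / 2) := ⟨by linarith, by linarith⟩
  have hmemk : k ∈ Ioo (-(π / 2)) (π / 2) := ⟨by linarith, hkπ⟩
  have hmemk' : -k ∈ Ioo (-(π / 2)) (π / 2) := ⟨by linarith, by linarith⟩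
  have htT : t ≤ T := by
    rw [ht_def, hT]
    rcases eq_or_lt_of_le hkr1 with h | h
    · rw [h]
    · exact le_of_lt (Real.strictMonoOn_tan hmem hmemk h)
  have htT' : -T ≤ t := by
    rw [ht_def, hT, ← Real.tan_neg]
    rcases eq_or_lt_of_le hkr2 with h | h
    · rw [← h]
    · exact le_of_lt (Real.strictMonoOn_tan hmemk' hmem h)
  have hT0 : 0 < T := by rw [hT]; exact Real.tan_pos_of_pos_of_lt_pi_div_two hk0 hkπ
  have ht2 : t ^ 2 ≤ T ^ 2 := sq_le_sq' htT' htT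
  have hθ2 : θ ^ 2 ≤ M ^ 2 * T ^ 2 := by
    rw [hθ_def, mul_pow]
    exact mul_le_mul_of_nonneg_left ht2 (sq_nonneg M)
  have e1 : (ν * (M ^ 2 * T ^ 2)) * ν = (4 * lam ^ 2 * k ^ 2 * T ^ 2) := by
    rw [hM_def]; field_simp; ring
  have hMT : ν * (M ^ 2 * T ^ 2) ≤ ν - 1 := by
    have h := hA'.trans_eq (rfl : (ν - 1) * ν = (ν - 1) * ν)
    rw [← e1] at h
    exact (mul_le_mul_iff_left₀ hν0).mp h
  have hθν : ν * θ ^ 2 ≤ ν - 1 :=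
    (mul_le_mul_of_nonneg_left hθ2 hν0.le).trans hMT
  have hθ1 : θ ^ 2 ≤ 1 := by
    have h : ν * θ ^ 2 ≤ ν * 1 := by rw [mul_one]; linarith
    exact (mul_le_mul_iff_right₀ hν0).mp h
  have hco1 : co ≤ 1 := Real.cos_le_one θ
  have hcob : 1 - θ ^ 2 / 2 ≤ co := Real.one_sub_sq_div_two_le_cos
  have hcop : (1 : ℝ) / 2 ≤ co := by linarith
  have hs2 : s ^ 2 = 1 - co ^ 2 := Real.sin_sq θ
  set D := lam * (M * k * (1 + t ^ 2)) with hD_def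
  have hD0 : 0 ≤ D := by
    rw [hD_def]
    have : (0:ℝ) ≤ 1 + t ^ 2 := by positivity
    positivity
  have hDsplit : D = ν * ε + ν / 2 * θ ^ 2 := by
    rw [hD_def, hθ_def, hM_def, hε_def]
    field_simp
    linear_combination hak
  have eDB : D * ν = 2 * lam ^ 2 * k ^ 2 * (1 + t ^ 2) := by
    rw [hD_def, hM_def]; field_simp
  have hD1 : D ≤ 1 := by
    have h1 : 2 * lam ^ 2 * k ^ 2 * (1 + t ^ 2) ≤ 2 * lam ^ 2 * k ^ 2 * (1 + T ^ 2) := by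
      have hc : (0:ℝ) ≤ 2 * lam ^ 2 * k ^ 2 := by positivity
      exact mul_le_mul_of_nonneg_left (by linarith) hc
    have h2 : D * ν ≤ 1 * ν := by rw [eDB, one_mul]; exact h1.trans hB'
    exact (mul_le_mul_iff_left₀ hν0).mp h2
  -- key upper bound : c ≤ (1 + D) * co
  have hkey : 1 + ε ≤ (1 + D) * co := by
    have hpos : (0:ℝ) ≤ 1 + D := by linarith
    have h5 : (1 + D) * (1 - θ ^ 2 / 2) ≤ (1 + D) * co :=
      mul_le_mul_of_nonneg_left hcob hpos
    have key : (1 + (ν * ε + ν / 2 * θ ^ 2)) * (1 - θ ^ 2 / 2) - (1 + ε)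
        = (ν - 1) * ε + (ν - 1) / 2 * θ ^ 2
          - (2 * ν * ε) * θ ^ 2 / 4 - (ν * θ ^ 2) * θ ^ 2 / 4 := by ring
    have h6 : (2 * ν * ε) * θ ^ 2 / 4 ≤ (ν - 1) * θ ^ 2 / 4 := by
      have := mul_le_mul_of_nonneg_right hC' (sq_nonneg θ)
      linarith
    have h7 : (ν * θ ^ 2) * θ ^ 2 / 4 ≤ (ν - 1) * θ ^ 2 / 4 := by
      have := mul_le_mul_of_nonneg_right hθν (sq_nonneg θ)
      linarith
    have h8 : 0 ≤ (ν - 1) * ε := by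
      have : (0:ℝ) ≤ ν - 1 := by linarith
      positivity
    rw [← hDsplit] at key
    linarith
  have hkey2 : D * co ≤ (1 + ε) + co := by
    have := mul_le_mul_of_nonneg_left hco1 hD0
    rw [mul_one] at this
    linarith
  have hkey' : 1 + ε ≤ co + D * co := by
    have e : (1 + D) * co = co + D * co := by ring
    linarith [hkey, e.le, e.ge]
  have hgoal : ((1 + ε) - D * co) ^ 2 ≤ co ^ 2 :=
    sq_le_sq' (by linarith) (by linarith)
  calc ((1 + ε) + lam * (-(M * k * (1 + t ^ 2) * co))) ^ 2 + (-s) ^ 2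
      = ((1 + ε) - D * co) ^ 2 + s ^ 2 := by rw [hD_def]; ring
    _ ≤ co ^ 2 + (1 - co ^ 2) := by rw [hs2]; linarith
    _ = 1 := by ring

noncomputable def Vfun (lam k ν : ℝ) : ℝ → ℝ :=
  fun r => -Real.sin (2 * lam * k / ν * Real.tan (k * r))

noncomputable def Vfun' (lam k ν : ℝ) : ℝ → ℝ :=
  fun r => -(2 * lam * k / ν * k * (1 + Real.tan (k * r) ^ 2) *
      Real.cos (2 * lam * k / ν * Real.tan (k * r)))

lemma psi_ge (a ν k T lam : ℝ) (ha : 0 < a) (hν1 : 1 < ν)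
    (hak : 2 * k ^ 2 = a * ν ^ 2) (hk0 : 0 < k) (hkπ : k < π / 2) (hT : T = Real.tan k)
    (hl0 : 0 < lam)
    (hA' : 4 * lam ^ 2 * k ^ 2 * T ^ 2 ≤ (ν - 1) * ν)
    (hB' : 2 * lam ^ 2 * k ^ 2 * (1 + T ^ 2) ≤ ν)
    (hC' : 2 * ν * (a * lam ^ 2) ≤ ν - 1)
    {φ : ℝ → ℝ} (hφ : ContDiff ℝ 1 φ) (hφm : φ (-1) = 0) (hφp : φ 1 = 0)
    (hφi : (∫ r in (-1 : ℝ)..1, φ r) = 1) :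
    1 + a * lam ^ 2 ≤ Psi lam φ := by
  have hν0 : 0 < ν := by linarith
  set c := 1 + a * lam ^ 2 with hc_def
  set V := Vfun lam k ν with hV_def
  set V' := Vfun' lam k ν with hV'_def
  have hcos : ∀ r ∈ Icc (-1 : ℝ) 1, (0:ℝ) < Real.cos (k * r) := by
    intro r hr
    obtain ⟨hr1, hr2⟩ := hr
    have hkr1 : k * r ≤ k := by
      calc k * r ≤ k * 1 := mul_le_mul_of_nonneg_left hr2 hk0.le
      _ = k := mul_one k
    have hkr2 : -k ≤ k * r := by
      have h := mul_le_mul_of_nonneg_left hr1 hk0.le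
      rw [mul_neg, mul_one] at h; exact h
    exact Real.cos_pos_of_mem_Ioo ⟨by linarith, by linarith⟩
  have htanc : ∀ r ∈ Icc (-1 : ℝ) 1, ContinuousAt (fun x => Real.tan (k * x)) r := by
    intro r hr
    exact (Real.continuousAt_tan.2 (hcos r hr).ne').comp
      ((continuous_const.mul continuous_id).continuousAt)
  have hVd : ∀ r ∈ Icc (-1 : ℝ) 1, HasDerivAt V (V' r) r := by
    intro r hr
    have hc0 := (hcos r hr).ne'
    have hu : HasDerivAt (fun x : ℝ => k * x) k r := by
      simpa using (hasDerivAt_id r).const_mul k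
    have ht : HasDerivAt (fun x : ℝ => Real.tan (k * x)) (1 / Real.cos (k * r) ^ 2 * k) r :=
      (Real.hasDerivAt_tan hc0).comp r hu
    have htM := ht.const_mul (2 * lam * k / ν)
    have hsin := htM.sin
    have hfinal := hsin.neg
    have h1 : 1 / Real.cos (k * r) ^ 2 = 1 + Real.tan (k * r) ^ 2 := by
      have h := Real.inv_one_add_tan_sq hc0
      rw [← h, one_div, inv_inv]
    rw [hV_def, hV'_def]
    simp only [Vfun, Vfun']
    refine hfinal.congr_deriv ?_
    rw [h1]; ring
  have hVc : ContinuousOn V (Icc (-1) 1) :=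
    fun r hr => ((hVd r hr).continuousAt).continuousWithinAt
  have hV'c : ContinuousOn V' (Icc (-1) 1) := by
    intro r hr
    apply ContinuousAt.continuousWithinAt
    rw [hV'_def]
    unfold Vfun'
    exact (((continuousAt_const.mul (continuousAt_const.add ((htanc r hr).pow 2))).mul
      (Real.continuous_cos.continuousAt.comp (continuousAt_const.mul (htanc r hr))))).neg
  have hφd : ∀ x : ℝ, HasDerivAt φ (deriv φ x) x :=
    fun x => ((hφ.differentiable one_ne_zero) x).hasDerivAt
  have huIcc : uIcc (-1 : ℝ) 1 = Icc (-1) 1 := uIcc_of_le (by norm_num)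
  have hφc : Continuous φ := hφ.continuous
  have hφ'c : Continuous (deriv φ) := hφ.continuous_deriv le_rfl
  have hprod : ∀ x ∈ uIcc (-1 : ℝ) 1,
      HasDerivAt (fun y => V y * φ y) (V' x * φ x + V x * deriv φ x) x := by
    rw [huIcc]; intro x hx; exact (hVd x hx).mul (hφd x)
  have hintD : IntervalIntegrable (fun y => V' y * φ y + V y * deriv φ y)
      MeasureTheory.volume (-1) 1 := by
    apply ContinuousOn.intervalIntegrable
    rw [huIcc]
    exact (hV'c.mul hφc.continuousOn).add (hVc.mul hφ'c.continuousOn)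
  have hFTC : (∫ y in (-1:ℝ)..1, (V' y * φ y + V y * deriv φ y))
      = V 1 * φ 1 - V (-1) * φ (-1) :=
    intervalIntegral.integral_eq_sub_of_hasDerivAt hprod hintD
  rw [hφp, hφm, mul_zero, mul_zero, sub_zero] at hFTC
  -- pointwise bound
  have hpt : ∀ y ∈ Icc (-1:ℝ) 1, (c + lam * V' y) * φ y + V y * (lam * deriv φ y)
      ≤ Real.sqrt ((φ y) ^ 2 + lam ^ 2 * (deriv φ y) ^ 2) := by
    intro y hy
    apply cauchy_pt
    exact dual_bound a ν k T lam ha hν1 hak hk0 hkπ hT hl0 hA' hB' hC' y hy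
  -- integrability
  have hintf : IntervalIntegrable (fun y => (c + lam * V' y) * φ y + V y * (lam * deriv φ y))
      MeasureTheory.volume (-1) 1 := by
    apply ContinuousOn.intervalIntegrable
    rw [huIcc]
    exact ((continuousOn_const.add (continuousOn_const.mul hV'c)).mul hφc.continuousOn).add
      (hVc.mul (continuousOn_const.mul hφ'c.continuousOn))
  have hints : IntervalIntegrable (fun y => Real.sqrt ((φ y) ^ 2 + lam ^ 2 * (deriv φ y) ^ 2))
      MeasureTheory.volume (-1) 1 :=
    (((hφc.pow 2).add (continuous_const.mul (hφ'c.pow 2))).sqrt).intervalIntegrable _ _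
  have hmono := intervalIntegral.integral_mono_on (by norm_num : (-1:ℝ) ≤ 1) hintf hints hpt
  -- compute the left integral
  have hcφint : IntervalIntegrable (fun y => c * φ y) MeasureTheory.volume (-1) 1 :=
    (continuous_const.mul hφc).intervalIntegrable _ _
  have hlamint : IntervalIntegrable (fun y => lam * (V' y * φ y + V y * deriv φ y))
      MeasureTheory.volume (-1) 1 := hintD.const_mul lam
  have e2 : (∫ y in (-1:ℝ)..1, ((c + lam * V' y) * φ y + V y * (lam * deriv φ y)))
      = c * (∫ y in (-1:ℝ)..1, φ y)
        + lam * (∫ y in (-1:ℝ)..1, (V' y * φ y + V y * deriv φ y)) := by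
    rw [← intervalIntegral.integral_const_mul, ← intervalIntegral.integral_const_mul,
      ← intervalIntegral.integral_add hcφint hlamint]
    exact intervalIntegral.integral_congr (fun y _ => by ring)
  rw [e2, hφi, hFTC, mul_one, mul_zero, add_zero] at hmono
  exact hmono

lemma thetaY_ge_ev (a : ℝ) (ha : 0 < a) (ha2 : a < π ^ 2 / 2) :
    ∀ᶠ lam in nhdsWithin 0 (Set.Ioi 0), 1 + a * lam ^ 2 ≤ thetaY lam := by
  have hpi := Real.pi_pos
  set x := π ^ 2 / (2 * a) with hx_def
  have hx1 : 1 < x := by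
    rw [hx_def, lt_div_iff₀ (by positivity)]
    linarith
  set ν := x ^ ((1:ℝ)/4) with hν_def
  have hν1 : 1 < ν := by
    rw [hν_def, Real.one_lt_rpow_iff_of_pos (by linarith)]
    exact Or.inl ⟨hx1, by norm_num⟩
  have hν0 : 0 < ν := by linarith
  have hν4 : ν ^ (4:ℕ) = x := by
    rw [hν_def, ← Real.rpow_natCast (x ^ ((1:ℝ)/4)) 4, ← Real.rpow_mul (by linarith : (0:ℝ) ≤ x)]
    norm_num
  have hπ2 : π ^ 2 = 2 * a * ν ^ 4 := by
    have h := hν4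
    rw [hx_def] at h
    have h2 : ν ^ 4 * (2 * a) = π ^ 2 := by
      rw [h]; field_simp
    linarith
  set k := π / (2 * ν) with hk_def
  have hk0 : 0 < k := by rw [hk_def]; positivity
  have hkπ : k < π / 2 := by
    rw [hk_def, div_lt_div_iff₀ (by positivity) (by norm_num)]
    nlinarith
  have hak : 2 * k ^ 2 = a * ν ^ 2 := by
    rw [hk_def]
    field_simp
    linear_combination hπ2
  set T := Real.tan k with hT_def
  have hT0 : 0 < T := Real.tan_pos_of_pos_of_lt_pi_div_two hk0 hkπ
  have hνm : 0 < ν - 1 := by linarith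
  set A := (ν - 1) * ν / (4 * k ^ 2 * T ^ 2) with hA_def
  set B := ν / (2 * k ^ 2 * (1 + T ^ 2)) with hB_def
  set C := (ν - 1) / (2 * ν * a) with hC_def
  have hA0 : 0 < A := by rw [hA_def]; positivity
  have hB0 : 0 < B := by rw [hB_def]; positivity
  have hC0 : 0 < C := by rw [hC_def]; positivity
  set lam0 := min 1 (min A (min B C)) with hl0_def
  have hlam00 : 0 < lam0 := lt_min (by norm_num) (lt_min hA0 (lt_min hB0 hC0))
  filter_upwards [Ioo_mem_nhdsGT hlam00] with lam hlam
  obtain ⟨hl0, hlu⟩ := hlam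
  have hl1 : lam ≤ 1 := hlu.le.trans (min_le_left _ _)
  have hsq : lam ^ 2 ≤ lam := by nlinarith
  have hlA : lam ^ 2 ≤ A :=
    hsq.trans (hlu.le.trans ((min_le_right _ _).trans (min_le_left _ _)))
  have hlB : lam ^ 2 ≤ B :=
    hsq.trans (hlu.le.trans ((min_le_right _ _).trans ((min_le_right _ _).trans (min_le_left _ _))))
  have hlC : lam ^ 2 ≤ C :=
    hsq.trans (hlu.le.trans ((min_le_right _ _).trans ((min_le_right _ _).trans (min_le_right _ _))))
  have hA' : 4 * lam ^ 2 * k ^ 2 * T ^ 2 ≤ (ν - 1) * ν := by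
    rw [hA_def, le_div_iff₀ (by positivity)] at hlA
    nlinarith [hlA]
  have hB' : 2 * lam ^ 2 * k ^ 2 * (1 + T ^ 2) ≤ ν := by
    have h1 : (0:ℝ) < 2 * k ^ 2 * (1 + T ^ 2) := by positivity
    rw [hB_def, le_div_iff₀ h1] at hlB
    nlinarith [hlB]
  have hC' : 2 * ν * (a * lam ^ 2) ≤ ν - 1 := by
    rw [hC_def, le_div_iff₀ (by positivity)] at hlC
    nlinarith [hlC]
  rw [thetaY_eq]
  apply le_csInf (sset_nonempty lam)
  rintro tt ⟨φ, hφ, hφm, hφp, hφi, rfl⟩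
  exact psi_ge a ν k T lam ha hν1 hak hk0 hkπ hT_def hl0 hA' hB' hC' hφ hφm hφp hφi

/-- The asymptotic behavior `θ_Y − 1 ∼ (π²/2)·λ²` for small `λ`:
`lim_{λ → 0⁺} (θ̂_Y(λ) − 1)/λ² = π²/2`. -/
theorem thetaY_asymptotics_small :
    Filter.Tendsto (fun lam : ℝ => (thetaY lam - 1) / lam ^ 2)
      (nhdsWithin 0 (Set.Ioi 0)) (nhds (Real.pi ^ 2 / 2)) := by
  have hpi := Real.pi_pos
  rw [tendsto_order]
  constructor
  · intro b hb
    set a := (max b 0 + π ^ 2 / 2) / 2 with ha_def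
    have hmax0 : (0:ℝ) ≤ max b 0 := le_max_right b 0
    have hmaxb : b ≤ max b 0 := le_max_left b 0
    have ha0 : 0 < a := by rw [ha_def]; positivity
    have hmaxlt : max b 0 < π ^ 2 / 2 := max_lt hb (by positivity)
    have ha2 : a < π ^ 2 / 2 := by rw [ha_def]; linarith
    have hab : b < a := by rw [ha_def]; linarith
    filter_upwards [thetaY_ge_ev a ha0 ha2, self_mem_nhdsWithin] with lam h1 h2
    have hlampos : 0 < lam := h2
    have hlam2 : 0 < lam ^ 2 := by positivity
    have h3 : a ≤ (thetaY lam - 1) / lam ^ 2 := by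
      rw [le_div_iff₀ hlam2]; linarith
    linarith
  · intro b hb
    filter_upwards [self_mem_nhdsWithin] with lam h2
    have hlampos : 0 < lam := h2
    have hlam2 : 0 < lam ^ 2 := by positivity
    have h1 := thetaY_le lam
    have h3 : (thetaY lam - 1) / lam ^ 2 ≤ π ^ 2 / 2 := by
      rw [div_le_iff₀ hlam2]; nlinarith [h1]
    linarith
end

section
/- For every real θ > 1, ∫_{0}^{1} 1/(θ − √(1−s²)) ds = ( π(θ − √(θ²−1)) + 2θ·arctan(1/√(θ²−1)) ) / ( 2√(θ²−1) ). -/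
open Real Set


/-- Explicit evaluation of the integral in equation (23bis) of the paper: for `θ > 1`,
`∫₀¹ 1/(θ − √(1−s²)) ds = (π(θ − √(θ²−1)) + 2θ·arctan(1/√(θ²−1))) / (2√(θ²−1))`. -/
theorem integral_eval (θ : ℝ) (hθ : 1 < θ) :
    (∫ s in (0 : ℝ)..1, 1 / (θ - Real.sqrt (1 - s ^ 2))) =
      (Real.pi * (θ - Real.sqrt (θ ^ 2 - 1)) +
        2 * θ * Real.arctan (1 / Real.sqrt (θ ^ 2 - 1))) /
        (2 * Real.sqrt (θ ^ 2 - 1)) := by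
  have hθ0 : (0:ℝ) < θ - 1 := by linarith
  have hθ1 : (0:ℝ) < θ + 1 := by linarith
  have hb2 : (0:ℝ) < θ^2 - 1 := by nlinarith
  set b := Real.sqrt (θ^2 - 1) with hbdef
  have hb : 0 < b := Real.sqrt_pos.mpr hb2
  have hbsq : b^2 = θ^2 - 1 := Real.sq_sqrt hb2.le
  set c := Real.sqrt ((θ+1)/(θ-1)) with hcdef
  have hcsq : c^2 = (θ+1)/(θ-1) := Real.sq_sqrt (by positivity)
  have hc0' : 0 ≤ c := Real.sqrt_nonneg _
  have hc1 : 1 < c := by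
    have h2 : 1 < c^2 := by rw [hcsq, lt_div_iff₀ hθ0]; linarith
    nlinarith
  have hc0 : 0 < c := by linarith
  have hcsq' : c^2 * (θ - 1) = θ + 1 := by rw [hcsq]; field_simp
  have hcb : c * (θ - 1) = b := by
    rw [← Real.sqrt_sq (show (0:ℝ) ≤ c * (θ-1) from (mul_pos hc0 hθ0).le),
      mul_pow, hcsq, hbdef]
    congr 1
    field_simp
    ring
  -- denominator bound
  have hden : ∀ u : ℝ, θ - 1 ≤ θ - Real.sqrt (1 - u^2) := by
    intro u
    have : Real.sqrt (1 - u^2) ≤ 1 := by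
      calc Real.sqrt (1 - u^2) ≤ Real.sqrt 1 := Real.sqrt_le_sqrt (by nlinarith)
        _ = 1 := Real.sqrt_one
    linarith
  have hg : Continuous fun u : ℝ => 1 / (θ - Real.sqrt (1 - u^2)) := by
    apply continuous_const.div
    · fun_prop
    · intro u
      have := hden u
      exact (show (0:ℝ) < θ - Real.sqrt (1 - u^2) by linarith).ne'
  -- Step 1: substitution s = sin t
  have hsub : (∫ s in (0:ℝ)..1, 1 / (θ - Real.sqrt (1 - s ^ 2)))
      = ∫ t in (0:ℝ)..(π/2), Real.cos t / (θ - Real.cos t) := by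
    have := intervalIntegral.integral_comp_smul_deriv
      (f := Real.sin) (f' := Real.cos) (a := 0) (b := π/2)
      (g := fun u => 1 / (θ - Real.sqrt (1 - u^2)))
      (fun x _ => Real.hasDerivAt_sin x) Real.continuousOn_cos hg
    rw [Real.sin_zero, Real.sin_pi_div_two] at this
    rw [← this]
    apply intervalIntegral.integral_congr
    intro t ht
    rw [Set.uIcc_of_le (by positivity)] at ht
    have hcos : 0 ≤ Real.cos t :=
      Real.cos_nonneg_of_mem_Icc ⟨by linarith [ht.1, pi_pos], ht.2⟩
    have h1 : 1 - Real.sin t ^ 2 = Real.cos t ^ 2 := by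
      have := Real.sin_sq_add_cos_sq t; linarith
    simp only [Function.comp, smul_eq_mul]
    rw [h1, Real.sqrt_sq hcos]
    ring
  rw [hsub]
  -- Step 2: antiderivative
  set F : ℝ → ℝ := fun t => -t + (2*θ/b) * Real.arctan (c * Real.tan (t/2)) with hF
  have hderiv : ∀ t ∈ Set.uIcc (0:ℝ) (π/2),
      HasDerivAt F (Real.cos t / (θ - Real.cos t)) t := by
    intro t ht
    rw [Set.uIcc_of_le (by positivity)] at ht
    have hcos2 : 0 < Real.cos (t/2) := by
      apply Real.cos_pos_of_mem_Ioo
      constructor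
      · have := pi_pos; linarith [ht.1]
      · have := pi_pos; linarith [ht.2]
    have htan : HasDerivAt (fun t : ℝ => Real.tan (t/2))
        ((1 / Real.cos (t/2)^2) * (1/2)) t :=
      by
        have h := (Real.hasDerivAt_tan (x := t/2) hcos2.ne').comp t ((hasDerivAt_id t).div_const 2)
        simpa [Function.comp_def] using h
    have harc : HasDerivAt (fun t : ℝ => Real.arctan (c * Real.tan (t/2)))
        ((1 / (1 + (c * Real.tan (t/2))^2)) * (c * ((1 / Real.cos (t/2)^2) * (1/2)))) t :=
      (Real.hasDerivAt_arctan _).comp t (htan.const_mul c)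
    have hFd : HasDerivAt F
        (-1 + (2*θ/b) * ((1 / (1 + (c * Real.tan (t/2))^2)) *
          (c * ((1 / Real.cos (t/2)^2) * (1/2))))) t := by
      exact ((hasDerivAt_id t).neg).add (harc.const_mul (2*θ/b))
    convert hFd using 1
    -- algebra
    have hct : Real.cos t = 2 * Real.cos (t/2)^2 - 1 := by
      have := Real.cos_sq (t/2)
      rw [show 2*(t/2) = t by ring] at this
      linarith
    have hts : Real.tan (t/2) = Real.sin (t/2) / Real.cos (t/2) := Real.tan_eq_sin_div_cos _
    have hsc : Real.sin (t/2)^2 = 1 - Real.cos (t/2)^2 := by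
      have := Real.sin_sq_add_cos_sq (t/2); linarith
    have hdt : 0 < θ - Real.cos t := by
      have := Real.cos_le_one t; linarith
    have hX : (0:ℝ) < 1 + (c * Real.tan (t/2))^2 := by positivity
    have h5 : (1 + (c * Real.tan (t/2))^2) * Real.cos (t/2)^2 = (θ - Real.cos t)/(θ-1) := by
      rw [hts, hct, eq_div_iff hθ0.ne']
      field_simp
      linear_combination Real.sin (t/2)^2 * hcsq' + (θ+1) * hsc
    have h6 : (1 / (1 + (c * Real.tan (t/2))^2)) * (c * ((1 / Real.cos (t/2)^2) * (1/2)))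
        = b / (2 * (θ - Real.cos t)) := by
      rw [← hcb]
      calc (1 / (1 + (c * Real.tan (t/2))^2)) * (c * ((1 / Real.cos (t/2)^2) * (1/2)))
          = c / (2 * ((1 + (c * Real.tan (t/2))^2) * Real.cos (t/2)^2)) := by
            field_simp
        _ = c / (2 * ((θ - Real.cos t)/(θ-1))) := by rw [h5]
        _ = c * (θ-1) / (2 * (θ - Real.cos t)) := by
            rw [div_eq_div_iff (mul_pos two_pos (div_pos hdt hθ0)).ne'
              (mul_pos two_pos hdt).ne']
            field_simp
    rw [h6]
    field_simp
    ring
  have hcont : IntervalIntegrable (fun t => Real.cos t / (θ - Real.cos t))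
      MeasureTheory.volume 0 (π/2) := by
    apply Continuous.intervalIntegrable
    apply Real.continuous_cos.div (by fun_prop)
    intro t
    have := Real.cos_le_one t
    exact (show (0:ℝ) < θ - Real.cos t by linarith).ne'
  rw [intervalIntegral.integral_eq_sub_of_hasDerivAt hderiv hcont]
  have hF0 : F 0 = 0 := by simp [hF]
  have hFpi : F (π/2) = -(π/2) + (2*θ/b) * Real.arctan c := by
    simp only [hF]
    rw [show π/2/2 = π/4 by ring, Real.tan_pi_div_four, mul_one]
  rw [hF0, hFpi]
  -- Step 3: arctan identity
  have hA4 : π/4 < Real.arctan c := by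
    rw [show π/4 = Real.arctan 1 from Real.arctan_one.symm]
    exact Real.arctan_strictMono hc1
  have hA2 : Real.arctan c < π/2 := Real.arctan_lt_pi_div_two c
  have key : Real.arctan (1/b) = 2 * Real.arctan c - π/2 := by
    have hd : (0:ℝ) < Real.sqrt (1 + c^2) := Real.sqrt_pos.mpr (by positivity)
    have hdsq : Real.sqrt (1 + c^2)^2 = 1 + c^2 := Real.sq_sqrt (by positivity)
    have hc2 : (c^2 - 1) * (θ - 1) = 2 := by
      rw [hcsq]; field_simp; ring
    have htanv : Real.tan (2 * Real.arctan c - π/2) = 1/b := by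
      rw [Real.tan_eq_sin_div_cos, Real.sin_sub_pi_div_two, Real.cos_sub_pi_div_two,
        Real.cos_two_mul, Real.sin_two_mul, Real.cos_arctan, Real.sin_arctan, ← hcb]
      rw [div_eq_div_iff
        (mul_pos (mul_pos two_pos (div_pos hc0 hd)) (by positivity : (0:ℝ) < 1 / Real.sqrt (1 + c^2))).ne'
        (mul_pos hc0 hθ0).ne']
      field_simp
      linear_combination hc2 + (θ - 1) * hdsq
    rw [← htanv, Real.arctan_tan (by linarith) (by linarith)]
  rw [key]
  field_simp
  ring
end

section
/- Let λ > 0, c ∈ ℝ, and let φ : (−1,1) → ℝ be twice continuously differentiable with φ(r) > 0 for all r ∈ (−1,1). Set w(r) = √(φ(r)² + λ²·φ′(r)²) and suppose φ satisfies the Euler–Lagrange equation c = φ(r)/w(r) − λ²·d/dr( φ′(r)/w(r) ) for all r ∈ (−1,1). Then the function ζ(r) = −λ·φ′(r)/w(r) is continuously differentiable on (−1,1) and satisfies λ·ζ′(r) = c − √(1 − ζ(r)²) for all r ∈ (−1,1). Moreover 1 − ζ(r)² = φ(r)²/w(r)² for all r ∈ (−1,1). -/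
/-- Reduction of the Euler–Lagrange equation to a first-order ODE (proof of Theorem 3.2):
if `φ > 0` is C² on `(−1,1)`, `w = √(φ² + λ²·(φ')²)`, and
`c = φ/w − λ²·(φ'/w)'` on `(−1,1)`, then `ζ = −λ·φ'/w` is C¹ on `(−1,1)`,
satisfies `λ·ζ' = c − √(1 − ζ²)` there, and `1 − ζ² = φ²/w²`. -/
theorem euler_lagrange_to_first_order (lam c : ℝ) (hlam : 0 < lam)
    (φ w ζ : ℝ → ℝ)
    (hφ : ContDiffOn ℝ 2 φ (Set.Ioo (-1) 1))
    (hpos : ∀ r ∈ Set.Ioo (-1 : ℝ) 1, 0 < φ r)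
    (hw : ∀ r, w r = Real.sqrt ((φ r) ^ 2 + lam ^ 2 * (deriv φ r) ^ 2))
    (hζ : ∀ r, ζ r = -lam * deriv φ r / w r)
    (hEL : ∀ r ∈ Set.Ioo (-1 : ℝ) 1,
      c = φ r / w r - lam ^ 2 * deriv (fun s => deriv φ s / w s) r) :
    ContDiffOn ℝ 1 ζ (Set.Ioo (-1) 1) ∧
    (∀ r ∈ Set.Ioo (-1 : ℝ) 1,
      lam * deriv ζ r = c - Real.sqrt (1 - (ζ r) ^ 2)) ∧
    (∀ r ∈ Set.Ioo (-1 : ℝ) 1, 1 - (ζ r) ^ 2 = (φ r) ^ 2 / (w r) ^ 2) := by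
  set s : Set ℝ := Set.Ioo (-1) 1 with hsdef
  have hs : IsOpen s := isOpen_Ioo
  have hφ1 : ContDiffOn ℝ 1 φ s := hφ.of_le (by norm_num)
  have hφ' : ContDiffOn ℝ 1 (deriv φ) s := hφ.deriv_of_isOpen hs (by norm_num)
  have hgpos : ∀ r ∈ s, 0 < (φ r) ^ 2 + lam ^ 2 * (deriv φ r) ^ 2 := by
    intro r hr
    have h1 : 0 < (φ r) ^ 2 := pow_pos (hpos r hr) 2
    nlinarith [sq_nonneg (lam * deriv φ r)]
  have hwpos : ∀ r ∈ s, 0 < w r := by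
    intro r hr
    rw [hw r]
    exact Real.sqrt_pos.mpr (hgpos r hr)
  have hwsq : ∀ r, (w r) ^ 2 = (φ r) ^ 2 + lam ^ 2 * (deriv φ r) ^ 2 := by
    intro r
    rw [hw r]
    exact Real.sq_sqrt (by positivity)
  have hwC1 : ContDiffOn ℝ 1 w s := by
    have : ContDiffOn ℝ 1 (fun r => Real.sqrt ((φ r) ^ 2 + lam ^ 2 * (deriv φ r) ^ 2)) s := by
      apply ContDiffOn.sqrt
      · exact (hφ1.pow 2).add (contDiffOn_const.mul (hφ'.pow 2))
      · exact fun r hr => (hgpos r hr).ne'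
    exact this.congr fun r _ => hw r
  have hζC1 : ContDiffOn ℝ 1 ζ s := by
    have : ContDiffOn ℝ 1 (fun r => -lam * deriv φ r / w r) s :=
      (contDiffOn_const.mul hφ').div hwC1 fun r hr => (hwpos r hr).ne'
    exact this.congr fun r _ => hζ r
  have hthird : ∀ r ∈ s, 1 - (ζ r) ^ 2 = (φ r) ^ 2 / (w r) ^ 2 := by
    intro r hr
    have hwne : w r ≠ 0 := (hwpos r hr).ne'
    rw [hζ r]
    field_simp
    nlinarith [hwsq r]
  refine ⟨hζC1, ?_, hthird⟩
  intro r hr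
  have hwne : w r ≠ 0 := (hwpos r hr).ne'
  -- sqrt (1 - ζ²) = φ/w
  have hsqrt : Real.sqrt (1 - (ζ r) ^ 2) = φ r / w r := by
    rw [hthird r hr, ← div_pow, Real.sqrt_sq (div_nonneg (hpos r hr).le (hwpos r hr).le)]
  -- differentiability of q = deriv φ / w at r
  have hqd : DifferentiableAt ℝ (fun t => deriv φ t / w t) r := by
    have h1 : DifferentiableAt ℝ (deriv φ) r :=
      ((hφ' r hr).contDiffAt (hs.mem_nhds hr)).differentiableAt one_ne_zero
    have h2 : DifferentiableAt ℝ w r :=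
      ((hwC1 r hr).contDiffAt (hs.mem_nhds hr)).differentiableAt one_ne_zero
    exact h1.div h2 hwne
  have hζeq : ζ = fun t => -lam * (deriv φ t / w t) := by
    funext t; rw [hζ t, mul_div_assoc]
  have hderiv : deriv ζ r = -lam * deriv (fun t => deriv φ t / w t) r := by
    rw [hζeq, deriv_const_mul _ hqd]
  rw [hderiv, hsqrt]
  have := hEL r hr
  nlinarith [this]
end

section
/- For λ > 0 let θ̂_Y(λ) denote the infimum of Ψ_λ(φ) = ∫_{−1}^{1} √(φ(r)² + λ²·φ′(r)²) dr over all continuously differentiable functions φ : [−1,1] → ℝ with φ(−1) = φ(1) = 0 and ∫_{−1}^{1} φ(r) dr = 1. Then θ̂_Y(λ) > 1 for every λ > 0. -/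
/-- The renormalized yield shear stress strictly exceeds 1 for every `λ > 0`
(equation (31) of the paper). -/
theorem thetaY_gt_one (lam : ℝ) (hlam : 0 < lam) : 1 < thetaY lam := by
  set s : ℝ := Real.sqrt (1 + lam ^ 2) with hs_def
  have hs_sq : s ^ 2 = 1 + lam ^ 2 := Real.sq_sqrt (by positivity)
  have hs_pos : 0 < s := Real.sqrt_pos.mpr (by positivity)
  have hs1 : (1 : ℝ) < s := by
    nlinarith [hs_sq, hs_pos]
  refine lt_of_lt_of_le hs1 (le_csInf ?_ ?_)
  · -- nonempty
    refine ⟨Psi lam (fun r => 3/4 - 3/4 * r ^ 2), fun r => 3/4 - 3/4 * r ^ 2, ?_, by norm_num,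
      by norm_num, ?_, rfl⟩
    · exact (contDiff_const.sub (contDiff_const.mul (contDiff_id.pow 2)))
    · rw [intervalIntegral.integral_sub (f := fun _ => (3/4:ℝ)) (g := fun r : ℝ => 3/4 * r ^ 2) intervalIntegrable_const
        ((continuous_const.mul (continuous_pow 2)).intervalIntegrable _ _)]
      simp [intervalIntegral.integral_const_mul, integral_pow]
      norm_num
  · rintro x ⟨φ, hφ, hm1, hp1, hint, rfl⟩
    have hdc : Continuous (deriv φ) := hφ.continuous_deriv le_rfl
    have hc : Continuous φ := hφ.continuous
    set w : ℝ := 1 / s with hw_def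
    set τ : ℝ := lam / s with hτ_def
    have hwτ : w ^ 2 + τ ^ 2 = 1 := by
      rw [hw_def, hτ_def]
      field_simp
      nlinarith [hs_sq]
    -- integration by parts: ∫ r * φ'(r) = -1
    have hibp : (∫ r in (-1:ℝ)..1, r * deriv φ r) = -1 := by
      have := intervalIntegral.integral_mul_deriv_eq_deriv_mul
        (u := fun r : ℝ => r) (u' := fun _ => (1:ℝ)) (v := φ) (v' := deriv φ)
        (a := (-1:ℝ)) (b := 1)
        (fun x _ => hasDerivAt_id x)
        (fun x _ => (hφ.differentiable one_ne_zero x).hasDerivAt)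
        (intervalIntegrable_const) (hdc.intervalIntegrable _ _)
      simp only [hm1, hp1, one_mul, mul_zero] at this
      rw [this, hint]
      ring
    -- pointwise calibration bound
    have key : ∀ r ∈ Set.Icc (-1:ℝ) 1,
        w * φ r - (τ * r) * (lam * deriv φ r)
          ≤ Real.sqrt ((φ r) ^ 2 + lam ^ 2 * (deriv φ r) ^ 2) := by
      intro r hr
      set X := φ r
      set Y := lam * deriv φ r
      have hXY : (φ r) ^ 2 + lam ^ 2 * (deriv φ r) ^ 2 = X ^ 2 + Y ^ 2 := by
        simp only [X, Y]; ring
      rw [hXY]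
      have hAB : w ^ 2 + (τ * r) ^ 2 ≤ 1 := by
        have hr2 : r ^ 2 ≤ 1 := by
          rcases hr with ⟨h1, h2⟩; nlinarith
        nlinarith [sq_nonneg τ]
      rcases le_or_gt (w * X - (τ * r) * Y) 0 with h | h
      · exact h.trans (Real.sqrt_nonneg _)
      · rw [Real.le_sqrt' h]
        nlinarith [sq_nonneg (w * Y + (τ * r) * X), sq_nonneg X, sq_nonneg Y,
          sq_nonneg (X ^ 2 + Y ^ 2)]
    -- integrate the bound
    have hint1 : IntervalIntegrable (fun r => w * φ r - (τ * r) * (lam * deriv φ r))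
        MeasureTheory.volume (-1) 1 := by
      exact ((continuous_const.mul hc).sub
        (((continuous_const.mul continuous_id).mul (continuous_const.mul hdc)))).intervalIntegrable _ _
    have hint2 : IntervalIntegrable
        (fun r => Real.sqrt ((φ r) ^ 2 + lam ^ 2 * (deriv φ r) ^ 2))
        MeasureTheory.volume (-1) 1 := by
      exact (Continuous.sqrt ((hc.pow 2).add (continuous_const.mul (hdc.pow 2)))).intervalIntegrable _ _
    have hmono := intervalIntegral.integral_mono_on (by norm_num : (-1:ℝ) ≤ 1) hint1 hint2 key
    have hcalc : (∫ r in (-1:ℝ)..1, (w * φ r - (τ * r) * (lam * deriv φ r))) = s := by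
      have h1 : (fun r => w * φ r - (τ * r) * (lam * deriv φ r))
          = fun r => w * φ r - (τ * lam) * (r * deriv φ r) := by
        funext r; ring
      rw [h1, intervalIntegral.integral_sub (f := fun r => w * φ r) (g := fun r => τ * lam * (r * deriv φ r))
        ((continuous_const.mul hc).intervalIntegrable _ _)
        ((continuous_const.mul (continuous_id'.mul hdc)).intervalIntegrable _ _),
        intervalIntegral.integral_const_mul, intervalIntegral.integral_const_mul,
        hint, hibp]
      rw [hw_def, hτ_def]
      field_simp
      nlinarith [hs_sq]
    rw [hcalc] at hmono
    exact hmono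
end
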